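/- Let K be a compact subgroup of O(n) with Haar measure and let ρ : ℝⁿ → ℝ^ℓ be given by a generating set ρ₁, …, ρ_ℓ of the K-invariant polynomials. Then for x, x' ∈ ℝⁿ: ρ(x) = ρ(x') if and only if x' = k·x for some k ∈ K (i.e., ρ separates K-orbits). -/

import Mathlib

open MvPolynomial

namespace Stmt10Aux

variable {n : ℕ}

lemma aeval_eq (f : Fin n → ℝ) (p : MvPolynomial (Fin n) ℝ) : aeval f p = eval f p :=
  DFunLike.congr_fun (coe_aeval_eq_eval f) p

noncomputable def subst (M : Fin n → Fin n → ℝ) (p : MvPolynomial (Fin n) ℝ) :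
    MvPolynomial (Fin n) ℝ :=
  bind₁ (fun i => ∑ j, C (M i j) * X j) p

lemma eval_subst (M : Fin n → Fin n → ℝ) (p : MvPolynomial (Fin n) ℝ) (y : Fin n → ℝ) :
    eval y (subst M p) = eval (fun i => ∑ j, M i j * y j) p := by
  have h := aeval_bind₁ (R := ℝ) y (fun i => ∑ j, C (M i j) * X j) p
  have h2 : (fun i => aeval y (∑ j, C (M i j) * X j)) = fun i => ∑ j, M i j * y j := by
    funext i; simp [aeval_eq]
  rw [subst, ← aeval_eq, h, h2, aeval_eq]

lemma cont_coeff (p : MvPolynomial (Fin n) ℝ) (m : Fin n →₀ ℕ) :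
    Continuous fun M : Fin n → Fin n → ℝ => coeff m (subst M p) := by
  classical
  induction p using MvPolynomial.induction_on generalizing m with
  | C a => simp only [subst, bind₁_C_right]; exact continuous_const
  | add p q hp hq =>
    simp only [subst, map_add, coeff_add]
    exact (hp m).add (hq m)
  | mul_X p i hp =>
    have key : ∀ M : Fin n → Fin n → ℝ, coeff m (subst M (p * X i)) =
        ∑ j, M i j * (if j ∈ m.support then coeff (m - Finsupp.single j 1) (subst M p) else 0) := by
      intro M
      have h1 : subst M (p * X i) = ∑ j, C (M i j) * (subst M p * X j) := by
        rw [subst, map_mul, bind₁_X_right, Finset.mul_sum]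
        simp only [subst]
        exact Finset.sum_congr rfl fun j _ => by ring
      rw [h1]
      simp only [coeff_sum, coeff_C_mul, coeff_mul_X']
    simp only [key]
    refine continuous_finset_sum _ fun j _ => ?_
    refine (continuous_apply_apply i j).mul ?_
    by_cases h : j ∈ m.support
    · simp only [h, if_true]; exact hp _
    · simp only [h, if_false]; exact continuous_const

lemma td_subst (M : Fin n → Fin n → ℝ) (p : MvPolynomial (Fin n) ℝ) :
    (subst M p).totalDegree ≤ p.totalDegree := by
  classical
  conv_lhs => rw [p.as_sum]
  rw [subst, map_sum]
  refine (totalDegree_finset_sum _ _).trans (Finset.sup_le fun u hu => ?_)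
  rw [bind₁_monomial]
  refine (totalDegree_mul _ _).trans ?_
  rw [totalDegree_C, zero_add]
  refine (totalDegree_finset_prod _ _).trans ?_
  have hL : ∀ i : Fin n, (∑ j, C (M i j) * X j : MvPolynomial (Fin n) ℝ).totalDegree ≤ 1 :=
    fun i => (totalDegree_finset_sum _ _).trans (Finset.sup_le fun j _ =>
      (totalDegree_mul _ _).trans (by simp [totalDegree_C, totalDegree_X]))
  refine le_trans (Finset.sum_le_sum (g := fun i => u i) fun i _ =>
    (totalDegree_pow _ _).trans (by simpa using Nat.mul_le_mul_left (u i) (hL i))) ?_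
  calc ∑ i ∈ u.support, u i = u.sum fun _ e => e := rfl
    _ ≤ p.totalDegree := le_totalDegree hu

lemma coord_continuous {n : ℕ} (i : Fin n) :
    Continuous fun y : EuclideanSpace ℝ (Fin n) => y i :=
  (continuous_apply i).comp (PiLp.continuous_ofLp 2 _)

lemma sw {n : ℕ} (S : Set (EuclideanSpace ℝ (Fin n))) (hS : IsCompact S)
    (f : C(S, ℝ)) {ε : ℝ} (hε : 0 < ε) :
    ∃ p : MvPolynomial (Fin n) ℝ,
      ∀ z : S, |eval (fun i => (z : EuclideanSpace ℝ (Fin n)) i) p - f z| < ε := by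
  haveI : CompactSpace S := isCompact_iff_compactSpace.mp hS
  let coordFn : Fin n → C(S, ℝ) := fun i =>
    ⟨fun z => (z : EuclideanSpace ℝ (Fin n)) i,
      (coord_continuous i).comp continuous_subtype_val⟩
  let Φ : MvPolynomial (Fin n) ℝ →ₐ[ℝ] C(S, ℝ) := MvPolynomial.aeval coordFn
  have hsep : (Φ.range : Subalgebra ℝ C(S, ℝ)).SeparatesPoints := by
    intro y z hyz
    have : ∃ i, (y : EuclideanSpace ℝ (Fin n)) i ≠ (z : EuclideanSpace ℝ (Fin n)) i := by
      by_contra h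
      push_neg at h
      exact hyz (Subtype.ext (PiLp.ext h))
    obtain ⟨i, hi⟩ := this
    exact ⟨coordFn i, ⟨Φ (X i), ⟨⟨X i, rfl⟩, by simp [Φ]⟩⟩, hi⟩
  have hcl := ContinuousMap.subalgebra_topologicalClosure_eq_top_of_separatesPoints _ hsep
  have hf : f ∈ closure (Φ.range : Set C(S, ℝ)) := by
    have : f ∈ (Φ.range).topologicalClosure := by rw [hcl]; trivial
    exact this
  rcases Metric.mem_closure_iff.mp hf ε hε with ⟨g, hgA, hg⟩
  rcases hgA with ⟨p, rfl⟩
  refine ⟨p, fun z => ?_⟩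
  have h1 : Φ p z = eval (fun i => (z : EuclideanSpace ℝ (Fin n)) i) p := by
    have h2 := MvPolynomial.comp_aeval (f := coordFn)
      (φ := ContinuousMap.evalAlgHom ℝ ℝ z)
    have h3 := DFunLike.congr_fun h2 p
    simpa [Φ, aeval_eq, coordFn] using h3
  rw [← h1, ← Real.dist_eq, dist_comm]
  exact lt_of_le_of_lt (ContinuousMap.dist_apply_le_dist z) hg

end Stmt10Aux

open Stmt10Aux MeasureTheory Metric

/-- For K a compact group acting on ℝⁿ by linear isometries and ρ₁,…,ρ_ℓ a generating
set of the algebra of K-invariant polynomials, the map ρ = (ρ₁,…,ρ_ℓ) separates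
K-orbits: ρ(x) = ρ(x') iff x' = k·x for some k ∈ K. -/
theorem stmt_10 {n ℓ : ℕ} {K : Type*} [Group K] [TopologicalSpace K] [IsTopologicalGroup K]
    [CompactSpace K]
    (φ : K →* (EuclideanSpace ℝ (Fin n) ≃ₗᵢ[ℝ] EuclideanSpace ℝ (Fin n)))
    (hφ : Continuous fun p : K × EuclideanSpace ℝ (Fin n) => φ p.1 p.2)
    (ρ : Fin ℓ → MvPolynomial (Fin n) ℝ)
    (hρinv : ∀ j, ∀ (k : K) (x : EuclideanSpace ℝ (Fin n)),
      MvPolynomial.eval (fun i => (φ k x) i) (ρ j) = MvPolynomial.eval (fun i => x i) (ρ j))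
    (hgen : ∀ p : MvPolynomial (Fin n) ℝ,
      (∀ (k : K) (x : EuclideanSpace ℝ (Fin n)),
        MvPolynomial.eval (fun i => (φ k x) i) p = MvPolynomial.eval (fun i => x i) p) →
      p ∈ Algebra.adjoin ℝ (Set.range ρ)) :
    ∀ x x' : EuclideanSpace ℝ (Fin n),
      (∀ j, MvPolynomial.eval (fun i => x i) (ρ j) = MvPolynomial.eval (fun i => x' i) (ρ j))
        ↔ ∃ k : K, φ k x = x' := by
  classical
  intro x x'
  constructor
  · intro hx
    by_contra hcon
    push_neg at hcon
    -- continuity of orbit maps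
    have hact : ∀ y : EuclideanSpace ℝ (Fin n), Continuous fun k : K => φ k y :=
      fun y => hφ.comp (continuous_id.prodMk continuous_const)
    have hmulapp : ∀ (a b : K) (y : EuclideanSpace ℝ (Fin n)), φ a (φ b y) = φ (a * b) y := by
      intro a b y
      rw [map_mul]
      rfl
    -- the two orbits
    set A : Set (EuclideanSpace ℝ (Fin n)) := Set.range (fun k : K => φ k x) with hA
    set B : Set (EuclideanSpace ℝ (Fin n)) := Set.range (fun k : K => φ k x') with hB
    have hAc : IsCompact A := isCompact_range (hact x)
    have hBc : IsCompact B := isCompact_range (hact x')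
    have hxA : x ∈ A := ⟨1, by simp⟩
    have hx'B : x' ∈ B := ⟨1, by simp⟩
    have hdisj : ∀ y, y ∈ A → y ∈ B → False := by
      rintro y ⟨k, hk⟩ ⟨k', hk'⟩
      apply hcon (k'⁻¹ * k)
      have h1 : φ k'⁻¹ (φ k x) = φ k'⁻¹ (φ k' x') := congrArg _ (hk.trans hk'.symm)
      rw [hmulapp, hmulapp, inv_mul_cancel, map_one] at h1
      simpa using h1
    -- Urysohn-type separating continuous function on A ∪ B
    have hdenom : ∀ z : ↥(A ∪ B), infDist z.1 A + infDist z.1 B ≠ 0 := by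
      rintro ⟨z, hz⟩
      rcases hz with hz | hz
      · have hzB : infDist z B > 0 :=
          (hBc.isClosed.notMem_iff_infDist_pos ⟨x', hx'B⟩).mp (fun h => hdisj z hz h)
        have h0 : 0 ≤ infDist z A := infDist_nonneg
        exact ne_of_gt (by linarith)
      · have hzA : infDist z A > 0 :=
          (hAc.isClosed.notMem_iff_infDist_pos ⟨x, hxA⟩).mp (fun h => hdisj z h hz)
        have h0 : 0 ≤ infDist z B := infDist_nonneg
        exact ne_of_gt (by linarith)
    let fS : C(↥(A ∪ B), ℝ) :=
      ⟨fun z => infDist z.1 A / (infDist z.1 A + infDist z.1 B),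
        Continuous.div ((continuous_infDist_pt A).comp continuous_subtype_val)
          (((continuous_infDist_pt A).comp continuous_subtype_val).add
            ((continuous_infDist_pt B).comp continuous_subtype_val)) hdenom⟩
    have hfA : ∀ z : ↥(A ∪ B), z.1 ∈ A → fS z = 0 := by
      intro z hz
      simp only [fS, ContinuousMap.coe_mk, infDist_zero_of_mem hz, zero_div]
    have hfB : ∀ z : ↥(A ∪ B), z.1 ∈ B → fS z = 1 := by
      intro z hz
      have hzA : infDist z.1 A > 0 :=
        (hAc.isClosed.notMem_iff_infDist_pos ⟨x, hxA⟩).mp (fun h => hdisj z.1 h hz)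
      simp only [fS, ContinuousMap.coe_mk, infDist_zero_of_mem hz, add_zero]
      exact div_self hzA.ne'
    -- Stone–Weierstrass approximation
    obtain ⟨p, hp⟩ := sw (A ∪ B) (hAc.union hBc) fS (by norm_num : (0:ℝ) < 1/4)
    have hpA : ∀ y, y ∈ A → MvPolynomial.eval (fun i => y i) p ≤ 1/4 := by
      intro y hy
      have h := hp ⟨y, Or.inl hy⟩
      rw [hfA ⟨y, Or.inl hy⟩ hy, sub_zero] at h
      exact (abs_lt.mp h).2.le
    have hpB : ∀ y, y ∈ B → (3/4 : ℝ) ≤ MvPolynomial.eval (fun i => y i) p := by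
      intro y hy
      have h := hp ⟨y, Or.inr hy⟩
      rw [hfB ⟨y, Or.inr hy⟩ hy] at h
      have := (abs_lt.mp h).1
      linarith
    -- Haar measure setup
    letI : MeasurableSpace K := borel K
    haveI : BorelSpace K := ⟨rfl⟩
    let μ : Measure K := Measure.haar
    haveI : IsFiniteMeasure μ := inferInstance
    -- matrix of the action
    set Mat : K → Fin n → Fin n → ℝ :=
      fun k i j => φ k (EuclideanSpace.single j 1) i with hMatdef
    have hMat : ∀ (k : K) (y : EuclideanSpace ℝ (Fin n)) (i : Fin n),
        (φ k y) i = ∑ j, Mat k i j * y j := by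
      intro k y i
      have hy : y = ∑ j, y j • EuclideanSpace.single j (1:ℝ) := by
        have h := (EuclideanSpace.basisFun (Fin n) ℝ).sum_repr y
        simp only [EuclideanSpace.basisFun_apply, EuclideanSpace.basisFun_repr] at h
        exact h.symm
      conv_lhs => rw [hy]
      rw [map_sum, WithLp.ofLp_sum, Finset.sum_apply i Finset.univ]
      refine Finset.sum_congr rfl fun j _ => ?_
      rw [_root_.map_smul]
      simp [Mat, PiLp.smul_apply, mul_comm]
    have hMatc : Continuous fun k : K => Mat k⁻¹ := by
      refine continuous_pi fun i => continuous_pi fun j => ?_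
      exact (coord_continuous i).comp
        ((hact (EuclideanSpace.single j 1)).comp continuous_inv)
    have hcm : ∀ m : Fin n →₀ ℕ,
        Continuous fun k : K => MvPolynomial.coeff m (subst (Mat k⁻¹) p) :=
      fun m => (cont_coeff p m).comp hMatc
    have hcmInt : ∀ m : Fin n →₀ ℕ,
        Integrable (fun k : K => MvPolynomial.coeff m (subst (Mat k⁻¹) p)) μ :=
      fun m => (hcm m).integrable_of_hasCompactSupport (HasCompactSupport.of_compactSpace _)
    -- the support bound
    set D : Finset (Fin n →₀ ℕ) :=
      Finset.Iic (Finsupp.equivFunOnFinite.symm fun _ : Fin n => p.totalDegree) with hDdef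
    have hD : ∀ M : Fin n → Fin n → ℝ, (subst M p).support ⊆ D := by
      intro M m hm
      rw [hDdef, Finset.mem_Iic]
      refine (Finsupp.le_iff _ _).mpr fun i hi => ?_
      simp only [Finsupp.equivFunOnFinite_symm_apply_apply]
      have h1 : (m.sum fun _ e => e) ≤ p.totalDegree :=
        (MvPolynomial.le_totalDegree hm).trans (td_subst M p)
      exact le_trans (Finset.single_le_sum (f := fun j => m j) (fun _ _ => Nat.zero_le _) hi) h1
    -- the averaged polynomial and averaged function
    set q : MvPolynomial (Fin n) ℝ :=
      ∑ m ∈ D, MvPolynomial.monomial m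
        (∫ k, MvPolynomial.coeff m (subst (Mat k⁻¹) p) ∂μ) with hqdef
    set g : EuclideanSpace ℝ (Fin n) → ℝ :=
      fun y => ∫ k, MvPolynomial.eval (fun i => (φ k⁻¹ y) i) p ∂μ with hgdef
    have hsubst_eval : ∀ (k : K) (y : EuclideanSpace ℝ (Fin n)),
        MvPolynomial.eval (fun i => (φ k⁻¹ y) i) p
          = MvPolynomial.eval (fun i => y i) (subst (Mat k⁻¹) p) := by
      intro k y
      rw [eval_subst]
      simp only [hMat]
    have hIntF : ∀ y : EuclideanSpace ℝ (Fin n),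
        Integrable (fun k : K => MvPolynomial.eval (fun i => (φ k⁻¹ y) i) p) μ := by
      intro y
      refine Continuous.integrable_of_hasCompactSupport ?_ (HasCompactSupport.of_compactSpace _)
      exact p.continuous_eval.comp
        (continuous_pi fun i => (coord_continuous i).comp ((hact y).comp continuous_inv))
    have heval : ∀ y : EuclideanSpace ℝ (Fin n),
        MvPolynomial.eval (fun i => y i) q = g y := by
      intro y
      have h1 : MvPolynomial.eval (fun i => y i) q
          = ∑ m ∈ D, (∫ k, MvPolynomial.coeff m (subst (Mat k⁻¹) p) ∂μ) * ∏ i, y i ^ m i := by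
        rw [hqdef, map_sum]
        exact Finset.sum_congr rfl fun m _ => by
          rw [MvPolynomial.eval_monomial, Finsupp.prod_pow]
      have h2 : ∀ k : K, MvPolynomial.eval (fun i => (φ k⁻¹ y) i) p
          = ∑ m ∈ D, MvPolynomial.coeff m (subst (Mat k⁻¹) p) * ∏ i, y i ^ m i := by
        intro k
        rw [hsubst_eval k y, MvPolynomial.eval_eq']
        refine Finset.sum_subset (hD _) fun m _ hms => ?_
        rw [MvPolynomial.notMem_support_iff.mp hms, zero_mul]
      rw [h1, hgdef]
      simp only [h2]
      rw [integral_finset_sum D (fun m _ => (hcmInt m).mul_const _)]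
      exact Finset.sum_congr rfl fun m _ => (integral_mul_const _ _).symm
    -- invariance of q
    have hinvq : ∀ (k : K) (y : EuclideanSpace ℝ (Fin n)),
        MvPolynomial.eval (fun i => (φ k y) i) q = MvPolynomial.eval (fun i => y i) q := by
      intro k₀ y
      rw [heval, heval, hgdef]
      have h3 : ∀ k : K, MvPolynomial.eval (fun i => (φ k⁻¹ (φ k₀ y)) i) p
          = MvPolynomial.eval (fun i => (φ (k₀⁻¹ * k)⁻¹ y) i) p := by
        intro k
        rw [hmulapp, mul_inv_rev, inv_inv]
      simp only [h3]
      exact integral_mul_left_eq_self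
        (fun k => MvPolynomial.eval (fun i => (φ k⁻¹ y) i) p) k₀⁻¹
    -- q is in the adjoin, hence takes equal values at x and x'
    have hq_adjoin : q ∈ Algebra.adjoin ℝ (Set.range ρ) := hgen q hinvq
    have hEq : MvPolynomial.eval (fun i => x i) q = MvPolynomial.eval (fun i => x' i) q := by
      have hT : Algebra.adjoin ℝ (Set.range ρ) ≤
          AlgHom.equalizer (MvPolynomial.aeval (fun i => x i))
            (MvPolynomial.aeval (fun i => x' i)) := by
        refine Algebra.adjoin_le ?_
        rintro _ ⟨j, rfl⟩
        show MvPolynomial.aeval (fun i => x i) (ρ j) = MvPolynomial.aeval (fun i => x' i) (ρ j)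
        rw [aeval_eq, aeval_eq]
        exact hx j
      have := hT hq_adjoin
      rw [AlgHom.mem_equalizer] at this
      rw [← aeval_eq, ← aeval_eq]
      exact this
    -- bounds
    set cK : ℝ := (μ Set.univ).toReal with hcKdef
    have hcK : 0 < cK :=
      ENNReal.toReal_pos (IsOpen.measure_ne_zero μ isOpen_univ Set.univ_nonempty)
        (measure_ne_top μ _)
    have hgx : g x ≤ cK * (1/4) := by
      have hb : ∀ k : K, MvPolynomial.eval (fun i => (φ k⁻¹ x) i) p ≤ 1/4 :=
        fun k => hpA _ ⟨k⁻¹, rfl⟩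
      calc g x ≤ ∫ _ : K, (1/4 : ℝ) ∂μ := integral_mono (hIntF x) (integrable_const _) hb
        _ = cK * (1/4) := by rw [integral_const, smul_eq_mul]; rfl
    have hgx' : cK * (3/4) ≤ g x' := by
      have hb : ∀ k : K, (3/4 : ℝ) ≤ MvPolynomial.eval (fun i => (φ k⁻¹ x') i) p :=
        fun k => hpB _ ⟨k⁻¹, rfl⟩
      calc cK * (3/4) = ∫ _ : K, (3/4 : ℝ) ∂μ := by rw [integral_const, smul_eq_mul]; rfl
        _ ≤ g x' := integral_mono (integrable_const _) (hIntF x') hb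
    have hgg : g x = g x' := by rw [← heval, ← heval, hEq]
    linarith
  · rintro ⟨k, hk⟩ j
    rw [← hk]
    exact (hρinv j k x).symm
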